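/- Let q ≥ 1. The image under B of the closed unit cube [−1,1]^q equals the closure of the invertible region D_θ; that is, B(closure D_ζ) = closure D_θ. -/

import Mathlib

/-- Forward recursion for the Barndorff-Nielsen–Schou / Monahan transformation:
`fwdRow ζ k i = θ_{i,k}` (1-based), with `θ_{k,k} = ζ_k` and
`θ_{i,k} = θ_{i,k-1} - ζ_k * θ_{k-i,k-1}` for `1 ≤ i ≤ k-1`. -/
noncomputable def fwdRow (ζ : ℕ → ℝ) : ℕ → ℕ → ℝ
  | 0 => fun _ => 0
  | (k+1) => fun i =>
      if i = k + 1 then ζ (k + 1)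
      else fwdRow ζ k i - ζ (k + 1) * fwdRow ζ k (k + 1 - i)

open Classical in
/-- Reverse recursion: `(invAux q θ d).1` is row `q - d` (i.e. `θ_{·, q-d}`), and
`(invAux q θ d).2` is the proposition that `|θ_{j,j}| < 1` for all `j` with `q - d ≤ j ≤ q`.
Row `q-(d+1)` is given by `θ_{i,k-1} = (θ_{i,k} + θ_{k,k} θ_{k-i,k})/(1-θ_{k,k}^2)` with
`k = q - d` when the diagonal condition holds at all levels `≥ k`, and is `0` otherwise. -/
noncomputable def invAux (q : ℕ) (θ : ℕ → ℝ) : ℕ → (ℕ → ℝ) × Prop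
  | 0 => (θ, |θ q| < 1)
  | (d+1) =>
      let p := invAux q θ d
      let row : ℕ → ℝ := fun i =>
        if p.2 then (p.1 i + p.1 (q - d) * p.1 (q - d - i)) / (1 - (p.1 (q - d)) ^ 2)
        else 0
      (row, p.2 ∧ |row (q - d - 1)| < 1)

/-- Interpret a vector in `ℝ^q` as a 1-based sequence `ℕ → ℝ` (value `0` out of range). -/
def toSeq {q : ℕ} (v : Fin q → ℝ) : ℕ → ℝ :=
  fun n => if h : n - 1 < q then v ⟨n - 1, h⟩ else 0

/-- The map `B : ℝ^q → ℝ^q`, `B(ζ)_i = θ_{i,q}`. -/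
noncomputable def Bmap {q : ℕ} (ζ : Fin q → ℝ) : Fin q → ℝ :=
  fun i => fwdRow (toSeq ζ) q (i.1 + 1)

/-- The map `B⁻ : ℝ^q → ℝ^q`, `B⁻(θ)_i = θ_{i,i}` computed by the reverse recursion. -/
noncomputable def Binv {q : ℕ} (θ : Fin q → ℝ) : Fin q → ℝ :=
  fun i => (invAux q (toSeq θ) (q - (i.1 + 1))).1 (i.1 + 1)

/-- The invertible region `D_θ ⊆ ℝ^q`: all complex roots of
`θ(z) = 1 - θ_1 z - ⋯ - θ_q z^q` satisfy `|z| > 1`. -/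
def invRegion (q : ℕ) : Set (Fin q → ℝ) :=
  {θ | ∀ z : ℂ, 1 - ∑ i : Fin q, (θ i : ℂ) * z ^ (i.1 + 1) = 0 → 1 < ‖z‖}

/-- The open unit cube `D_ζ = (-1,1)^q ⊆ ℝ^q`. -/
def openCube (q : ℕ) : Set (Fin q → ℝ) :=
  {ζ | ∀ i, ζ i ∈ Set.Ioo (-1 : ℝ) 1}

/-! ### Auxiliary analytic lemmas -/

open Finset Complex Polynomial Metric

noncomputable def Pf (r : ℕ → ℝ) (k : ℕ) (z : ℂ) : ℂ :=
  1 - ∑ i ∈ Finset.range k, (r (i+1) : ℂ) * z ^ (i+1)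

noncomputable def Qf (r : ℕ → ℝ) (k : ℕ) (z : ℂ) : ℂ :=
  z ^ k - ∑ i ∈ Finset.range k, (r (k-i) : ℂ) * z ^ i

lemma Qf_eq_conj (r : ℕ → ℝ) (k : ℕ) (z : ℂ) (hz : ‖z‖ = 1) :
    Qf r k z = z ^ k * (starRingEnd ℂ) (Pf r k z) := by
  have hz0 : z ≠ 0 := by intro h; simp [h] at hz
  have hcz : (starRingEnd ℂ) z = z⁻¹ := by
    have h1 : (starRingEnd ℂ) z * z = 1 := by
      rw [mul_comm, Complex.mul_conj, Complex.normSq_eq_norm_sq, hz]; norm_num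
    exact eq_inv_of_mul_eq_one_left h1
  rw [Qf, Pf, map_sub, map_one, mul_sub, mul_one, map_sum, Finset.mul_sum]
  congr 1
  rw [← Finset.sum_range_reflect (fun i => z^k * (starRingEnd ℂ) ((r (i+1) : ℂ) * z ^ (i+1))) k]
  apply Finset.sum_congr rfl
  intro i hi
  simp only [Finset.mem_range] at hi
  have e1 : k - 1 - i + 1 = k - i := by omega
  have e2 : k - (k - i) = i := by omega
  have e3 : z ^ k * (z ^ (k - i))⁻¹ = z ^ i := by
    rw [← pow_sub₀ z hz0 (by omega : k - i ≤ k), e2]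
  rw [e1, map_mul, map_pow, Complex.conj_ofReal, hcz, inv_pow,
    show z ^ k * ((r (k-i) : ℂ) * (z ^ (k-i))⁻¹) = (r (k-i) : ℂ) * (z ^ k * (z ^ (k-i))⁻¹) from by ring, e3]

lemma abs_Qf_eq (r : ℕ → ℝ) (k : ℕ) (z : ℂ) (hz : ‖z‖ = 1) :
    ‖Qf r k z‖ = ‖Pf r k z‖ := by
  rw [Qf_eq_conj r k z hz, norm_mul, norm_pow, hz, one_pow, one_mul, Complex.norm_conj]

lemma differentiable_Pf (r : ℕ → ℝ) (k : ℕ) : Differentiable ℂ (Pf r k) := by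
  unfold Pf
  exact (differentiable_const _).sub
    (Differentiable.fun_sum fun i _ => (differentiable_const _).mul (differentiable_pow _))

lemma differentiable_Qf (r : ℕ → ℝ) (k : ℕ) : Differentiable ℂ (Qf r k) := by
  unfold Qf
  exact (differentiable_pow _).sub
    (Differentiable.fun_sum fun i _ => (differentiable_const _).mul (differentiable_pow _))

lemma abs_Qf_le (r : ℕ → ℝ) (k : ℕ) (h : ∀ z : ℂ, ‖z‖ ≤ 1 → Pf r k z ≠ 0)
    (z : ℂ) (hz : ‖z‖ ≤ 1) : ‖Qf r k z‖ ≤ ‖Pf r k z‖ := by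
  set f : ℂ → ℂ := fun w => Qf r k w / Pf r k w with hf
  have hmem : ∀ w : ℂ, w ∈ closedBall (0:ℂ) 1 → ‖w‖ ≤ 1 := by
    intro w hw; simpa [Complex.dist_eq] using mem_closedBall.mp hw
  have hcl : closure (ball (0:ℂ) 1) = closedBall 0 1 := closure_ball 0 one_ne_zero
  have hd : DiffContOnCl ℂ f (ball 0 1) := by
    constructor
    · exact ((differentiable_Qf r k).differentiableOn).div
        ((differentiable_Pf r k).differentiableOn)
        (fun w hw => h w (hmem w (ball_subset_closedBall hw)))
    · rw [hcl]
      exact ((differentiable_Qf r k).continuous.continuousOn).div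
        ((differentiable_Pf r k).continuous.continuousOn)
        (fun w hw => h w (hmem w hw))
  have hfr : ∀ w ∈ frontier (ball (0:ℂ) 1), ‖f w‖ ≤ 1 := by
    intro w hw
    rw [frontier_ball (0:ℂ) one_ne_zero] at hw
    have hw1 : ‖w‖ = 1 := by simpa [Complex.dist_eq] using mem_sphere.mp hw
    have hP := h w (le_of_eq hw1)
    rw [hf]
    simp only [norm_div]
    rw [abs_Qf_eq r k w hw1, div_self (by simpa using hP)]
  have hzc : z ∈ closure (ball (0:ℂ) 1) := by
    rw [hcl]; simpa [Complex.dist_eq] using hz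
  have := Complex.norm_le_of_forall_mem_frontier_norm_le isBounded_ball hd hfr hzc
  have hP := h z hz
  rw [hf] at this
  simp only [norm_div] at this
  calc ‖Qf r k z‖ = ‖Qf r k z‖ / ‖Pf r k z‖
        * ‖Pf r k z‖ := by
        rw [div_mul_cancel₀]
        exact norm_ne_zero_iff.mpr hP
    _ ≤ 1 * ‖Pf r k z‖ := by
        apply mul_le_mul_of_nonneg_right this (norm_nonneg _)
    _ = _ := one_mul _

lemma one_lt_multiset_prod (m : Multiset ℝ) (hm : m ≠ 0) (h : ∀ x ∈ m, 1 < x) :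
    1 < m.prod := by
  obtain ⟨a, ha⟩ := Multiset.exists_mem_of_ne_zero hm
  have : m = a ::ₘ m.erase a := (Multiset.cons_erase ha).symm
  rw [this, Multiset.prod_cons]
  have h1 : (1:ℝ) ≤ (m.erase a).prod :=
    Multiset.one_le_prod (fun x hx => le_of_lt (h x (Multiset.mem_of_mem_erase hx)))
  nlinarith [h a ha]

lemma abs_diag_lt_one (r : ℕ → ℝ) (k : ℕ) (hk : 1 ≤ k)
    (h : ∀ z : ℂ, ‖z‖ ≤ 1 → Pf r k z ≠ 0) : |r k| < 1 := by
  set p : Polynomial ℂ := 1 - ∑ i ∈ Finset.range k, C (r (i+1) : ℂ) * X ^ (i+1) with hp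
  have heval : ∀ z, p.eval z = Pf r k z := by
    intro z
    simp [hp, Pf, eval_finset_sum]
  have hco : p.coeff k = -(r k : ℂ) := by
    rw [hp, coeff_sub, coeff_one, if_neg (by omega : ¬ k = 0), finset_sum_coeff]
    rw [Finset.sum_eq_single (k-1)]
    · simp only [coeff_C_mul, coeff_X_pow]
      rw [if_pos (by omega : k = k - 1 + 1)]
      have e : k - 1 + 1 = k := by omega
      rw [e]; ring
    · intro i hi hne
      simp only [coeff_C_mul, coeff_X_pow]
      rw [if_neg (by simp at hi; omega), mul_zero]
    · intro hmem
      simp at hmem; omega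
  have hdeg : p.natDegree ≤ k := by
    rw [hp]
    refine le_trans (natDegree_sub_le _ _) (max_le (by simp) ?_)
    apply natDegree_sum_le_of_forall_le
    intro i hi
    refine le_trans (natDegree_C_mul_le _ _) ?_
    simp only [natDegree_X_pow]
    simp at hi; omega
  have hp0 : p ≠ 0 := by
    intro e
    have := heval 0
    rw [e] at this
    simp only [eval_zero] at this
    apply h 0 (by simp)
    rw [← this]
  have hroots : ∀ x ∈ p.roots, 1 < ‖x‖ := by
    intro x hx
    have hx0 : p.eval x = 0 := (mem_roots hp0).mp hx
    by_contra hle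
    exact h x (le_of_not_gt hle) (by rw [← heval x, hx0])
  rcases lt_or_eq_of_le hdeg with hlt | heq
  · have : p.coeff k = 0 := coeff_eq_zero_of_natDegree_lt hlt
    rw [hco] at this
    have : r k = 0 := by exact_mod_cast neg_eq_zero.mp this
    rw [this]; norm_num
  · -- natDegree = k, leading coeff = -(r k)
    have hsp : p.Splits := IsAlgClosed.splits p
    have hfac := (C_leadingCoeff_mul_prod_multiset_X_sub_C (splits_iff_card_roots.mp hsp)).symm
    have hcard : p.roots.card = k := by
      have := splits_iff_card_roots.mp hsp
      rwa [heq] at this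
    have h1 : (1:ℂ) = p.eval 0 := by
      rw [heval]; simp [Pf]
    rw [hfac] at h1
    rw [eval_mul, eval_C, eval_multiset_prod, Multiset.map_map] at h1
    have h2 := congrArg (normHom : ℂ →*₀ ℝ) h1
    rw [map_one, map_mul, map_multiset_prod, Multiset.map_map] at h2
    have hlc : (normHom : ℂ →*₀ ℝ) p.leadingCoeff = |r k| := by
      rw [normHom_apply, leadingCoeff, heq, hco, norm_neg, Complex.norm_real, Real.norm_eq_abs]
    rw [hlc] at h2
    set m : Multiset ℝ := p.roots.map (⇑(normHom : ℂ →*₀ ℝ) ∘ eval 0 ∘ fun a => X - C a) with hm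
    have hmne : m ≠ 0 := by
      intro e
      have hc : Multiset.card m = 0 := by rw [e]; simp
      rw [hm, Multiset.card_map, hcard] at hc; omega
    have hmall : ∀ x ∈ m, 1 < x := by
      intro x hx
      rw [hm] at hx
      obtain ⟨a, ha, rfl⟩ := Multiset.mem_map.mp hx
      simpa [normHom_apply] using hroots a ha
    have hprod := one_lt_multiset_prod m hmne hmall
    nlinarith [abs_nonneg (r k), hprod, h2.symm]

lemma Pf_step (r r' : ℕ → ℝ) (c : ℝ) (k : ℕ) (hdiag : r' (k+1) = c)
    (hmid : ∀ i, i < k → r' (i+1) = r (i+1) - c * r (k-i)) (z : ℂ) :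
    Pf r' (k+1) z = Pf r k z - (c : ℂ) * z * Qf r k z := by
  unfold Pf Qf
  rw [Finset.sum_range_succ, hdiag]
  rw [mul_sub, Finset.mul_sum]
  have hsum : ∀ i ∈ Finset.range k,
      (r' (i+1) : ℂ) * z ^ (i+1) =
      (r (i+1) : ℂ) * z ^ (i+1) - (c:ℂ) * z * ((r (k-i) : ℂ) * z ^ i) := by
    intro i hi
    simp only [Finset.mem_range] at hi
    rw [hmid i hi]
    push_cast
    ring
  rw [Finset.sum_congr rfl hsum, Finset.sum_sub_distrib]
  push_cast
  ring

lemma Pf_bstep (r r' : ℕ → ℝ) (c : ℝ) (k : ℕ) (hk : 1 ≤ k) (hc : (1:ℝ) - c^2 ≠ 0)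
    (hdiag : r k = c)
    (hmid : ∀ i, i + 1 < k → r' (i+1) = (r (i+1) + c * r (k-(i+1))) / (1 - c^2)) (z : ℂ) :
    Pf r' (k-1) z = (Pf r k z + (c:ℂ) * Qf r k z) / (1 - (c:ℂ)^2) := by
  have hcC : (1:ℂ) - (c:ℂ)^2 ≠ 0 := by
    intro e
    apply hc
    exact_mod_cast e
  rw [eq_div_iff hcC]
  unfold Pf Qf
  obtain ⟨k', rfl⟩ : ∃ k', k = k' + 1 := ⟨k - 1, by omega⟩
  simp only [Nat.add_sub_cancel]
  rw [Finset.sum_range_succ (fun i => (r (i+1) : ℂ) * z ^ (i+1)) k']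
  rw [Finset.sum_range_succ' (fun i => (r (k'+1-i) : ℂ) * z ^ i) k']
  rw [hdiag]
  have hsum : ∀ i ∈ Finset.range k',
      (r' (i+1) : ℂ) * z ^ (i+1) * ((1:ℂ) - (c:ℂ)^2) =
      ((r (i+1) : ℂ) + (c:ℂ) * (r (k'+1-(i+1)) : ℂ)) * z ^ (i+1) := by
    intro i hi
    simp only [Finset.mem_range] at hi
    rw [hmid i (by omega)]
    push_cast
    field_simp
  have expand : (1 - ∑ i ∈ Finset.range k', (r' (i+1) : ℂ) * z ^ (i+1)) * (1 - (c:ℂ)^2)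
      = (1 - (c:ℂ)^2) - ∑ i ∈ Finset.range k',
        ((r (i+1) : ℂ) + (c:ℂ) * (r (k'+1-(i+1)) : ℂ)) * z ^ (i+1) := by
    rw [sub_mul, one_mul, Finset.sum_mul, Finset.sum_congr rfl hsum]
  rw [expand]
  have e0 : k' + 1 - 0 = k' + 1 := rfl
  rw [e0, hdiag]
  have hre : ∑ i ∈ Finset.range k', ((r (i+1) : ℂ) + (c:ℂ) * (r (k'+1-(i+1)) : ℂ)) * z ^ (i+1)
      = ∑ i ∈ Finset.range k', ((r (i+1) : ℂ) + (c:ℂ) * (r (k'-i) : ℂ)) * z ^ (i+1) := by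
    apply Finset.sum_congr rfl
    intro i hi
    rw [show k'+1-(i+1) = k'-i from by omega]
  rw [hre]
  have hre2 : ∑ i ∈ Finset.range k', (r (k'+1-(i+1)) : ℂ) * z ^ (i+1)
      = ∑ i ∈ Finset.range k', (r (k'-i) : ℂ) * z ^ (i+1) := by
    apply Finset.sum_congr rfl
    intro i hi
    rw [show k'+1-(i+1) = k'-i from by omega]
  rw [hre2]
  have h2 : ∑ i ∈ Finset.range k', ((r (i+1) : ℂ) + (c:ℂ) * (r (k'-i) : ℂ)) * z ^ (i+1)
      = (∑ i ∈ Finset.range k', (r (i+1):ℂ) * z^(i+1))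
        + (c:ℂ) * ∑ i ∈ Finset.range k', (r (k'-i):ℂ) * z^(i+1) := by
    rw [Finset.mul_sum, ← Finset.sum_add_distrib]
    apply Finset.sum_congr rfl
    intro i hi
    ring
  rw [h2]
  ring


/-! ### The forward direction -/

lemma fwdRow_congr (s s' : ℕ → ℝ) : ∀ k, (∀ j, 1 ≤ j → j ≤ k → s j = s' j) →
    ∀ i, fwdRow s k i = fwdRow s' k i := by
  intro k
  induction k with
  | zero => intro _ i; rfl
  | succ k ih =>
    intro h i
    have hk := h (k+1) (by omega) le_rfl
    show (if i = k + 1 then s (k+1) else fwdRow s k i - s (k+1) * fwdRow s k (k+1-i))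
      = (if i = k + 1 then s' (k+1) else fwdRow s' k i - s' (k+1) * fwdRow s' k (k+1-i))
    have hrec := ih (fun j h1 h2 => h j h1 (by omega))
    by_cases hik : i = k + 1
    · rw [if_pos hik, if_pos hik, hk]
    · rw [if_neg hik, if_neg hik, hk, hrec i, hrec (k+1-i)]

lemma fwd_nonzero (s : ℕ → ℝ) : ∀ k, (∀ j, 1 ≤ j → j ≤ k → |s j| < 1) →
    ∀ z : ℂ, ‖z‖ ≤ 1 → Pf (fwdRow s k) k z ≠ 0 := by
  intro k
  induction k with
  | zero => intro _ z _; simp [Pf]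
  | succ k ih =>
    intro h z hz h0
    have hprev : ∀ w : ℂ, ‖w‖ ≤ 1 → Pf (fwdRow s k) k w ≠ 0 :=
      ih (fun j h1 h2 => h j h1 (by omega))
    have hstep := Pf_step (fwdRow s k) (fwdRow s (k+1)) (s (k+1)) k
      (by show (if k + 1 = k + 1 then _ else _) = _ ; rw [if_pos rfl])
      (by intro i hik
          show (if i + 1 = k + 1 then _ else _) = _
          rw [if_neg (by omega), show k + 1 - (i+1) = k - i from by omega])
      z
    rw [hstep] at h0
    have hPz : Pf (fwdRow s k) k z ≠ 0 := hprev z hz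
    have hQ := abs_Qf_le (fwdRow s k) k hprev z hz
    have heq : Pf (fwdRow s k) k z = (s (k+1) : ℂ) * z * Qf (fwdRow s k) k z := by
      linear_combination h0
    have habs := congrArg (fun w : ℂ => ‖w‖) heq
    rw [norm_mul, norm_mul, Complex.norm_real, Real.norm_eq_abs] at habs
    have hc : |s (k+1)| < 1 := h (k+1) (by omega) le_rfl
    have hPpos : 0 < ‖Pf (fwdRow s k) k z‖ :=
      norm_pos_iff.mpr hPz
    nlinarith [norm_nonneg (Qf (fwdRow s k) k z), norm_nonneg z,
      abs_nonneg (s (k+1)), mul_le_mul_of_nonneg_left hz (abs_nonneg (s (k+1)))]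

lemma Bmap_mem_invRegion {q : ℕ} (ζ : Fin q → ℝ) (hζ : ζ ∈ openCube q) :
    Bmap ζ ∈ invRegion q := by
  intro z hz
  by_contra hle
  push_neg at hle
  have hbound : ∀ j, 1 ≤ j → j ≤ q → |toSeq ζ j| < 1 := by
    intro j h1 h2
    have hj : j - 1 < q := by omega
    rw [toSeq, dif_pos hj]
    exact abs_lt.mpr (hζ ⟨j-1, hj⟩)
  apply fwd_nonzero (toSeq ζ) q hbound z hle
  rw [Pf, ← hz]
  congr 1
  rw [← Fin.sum_univ_eq_sum_range (fun n => (fwdRow (toSeq ζ) q (n+1) : ℂ) * z ^ (n+1)) q]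
  rfl

/-! ### The backward direction -/

noncomputable def bwd (t : ℕ → ℝ) (q : ℕ) : ℕ → ℕ → ℝ
  | 0 => t
  | (d+1) => fun i =>
      (bwd t q d i + bwd t q d (q-d) * bwd t q d (q-d-i)) / (1 - (bwd t q d (q-d))^2)

lemma bwd_succ (t : ℕ → ℝ) (q d i : ℕ) :
    bwd t q (d+1) i =
      (bwd t q d i + bwd t q d (q-d) * bwd t q d (q-d-i)) / (1 - (bwd t q d (q-d))^2) := rfl

lemma bwd_nonzero (t : ℕ → ℝ) (q : ℕ)
    (ht : ∀ z : ℂ, ‖z‖ ≤ 1 → Pf t q z ≠ 0) :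
    ∀ d, d ≤ q → ∀ z : ℂ, ‖z‖ ≤ 1 → Pf (bwd t q d) (q - d) z ≠ 0 := by
  intro d
  induction d with
  | zero => intro _ z hz; exact ht z hz
  | succ d ih =>
    intro hdq z hz h0
    have hprev : ∀ w : ℂ, ‖w‖ ≤ 1 → Pf (bwd t q d) (q - d) w ≠ 0 :=
      ih (by omega)
    set k := q - d with hkdef
    have hk1 : 1 ≤ k := by omega
    set c := bwd t q d k with hcdef
    have hc : |c| < 1 := abs_diag_lt_one (bwd t q d) k hk1 hprev
    have hc2 : (1:ℝ) - c^2 ≠ 0 := by nlinarith [abs_nonneg c, _root_.sq_abs c]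
    have hstep := Pf_bstep (bwd t q d) (bwd t q (d+1)) c k hk1 hc2 rfl
      (by intro i hik
          have e : q - d - (i+1) = k - (i+1) := by omega
          simp only [bwd_succ, e]; rfl)
      z
    rw [show q - (d+1) = k - 1 from by omega] at h0
    rw [hstep] at h0
    have hcC : (1:ℂ) - (c:ℂ)^2 ≠ 0 := by
      intro e; apply hc2; exact_mod_cast e
    rw [_root_.div_eq_zero_iff] at h0
    rcases h0 with h0 | h0
    · have hPz : Pf (bwd t q d) k z ≠ 0 := hprev z hz
      have hQ := abs_Qf_le (bwd t q d) k hprev z hz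
      have heq : Pf (bwd t q d) k z = -((c:ℂ) * Qf (bwd t q d) k z) := by
        linear_combination h0
      have habs := congrArg (fun w : ℂ => ‖w‖) heq
      rw [norm_neg, norm_mul, Complex.norm_real, Real.norm_eq_abs] at habs
      have hPpos : 0 < ‖Pf (bwd t q d) k z‖ := norm_pos_iff.mpr hPz
      nlinarith [norm_nonneg (Qf (bwd t q d) k z), abs_nonneg c]
    · exact hcC h0

lemma bwd_fwd_inv (t : ℕ → ℝ) (q : ℕ)
    (ht : ∀ z : ℂ, ‖z‖ ≤ 1 → Pf t q z ≠ 0) :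
    ∀ k, k ≤ q → ∀ i, 1 ≤ i → i ≤ k →
      fwdRow (fun j => bwd t q (q - j) j) k i = bwd t q (q - k) i := by
  have hdiag : ∀ k, 1 ≤ k → k ≤ q → |bwd t q (q-k) k| < 1 := by
    intro k h1 h2
    have := abs_diag_lt_one (bwd t q (q-k)) k h1
      (by have := bwd_nonzero t q ht (q-k) (by omega)
          rwa [show q - (q-k) = k from by omega] at this)
    exact this
  intro k
  induction k with
  | zero => intro _ i h1 h2; omega
  | succ k ih =>
    intro hkq i h1 h2
    set ζs : ℕ → ℝ := fun j => bwd t q (q - j) j with hζs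
    by_cases hik : i = k + 1
    · subst hik
      show (if k + 1 = k + 1 then ζs (k+1)
        else fwdRow ζs k (k+1) - ζs (k+1) * fwdRow ζs k (k+1-(k+1))) = bwd t q (q-(k+1)) (k+1)
      rw [if_pos rfl]
    · have hi : i ≤ k := by omega
      show (if i = k + 1 then ζs (k+1) else
          fwdRow ζs k i - ζs (k+1) * fwdRow ζs k (k+1-i)) = _
      rw [if_neg hik]
      rw [ih (by omega) i h1 hi, ih (by omega) (k+1-i) (by omega) (by omega)]
      -- expand bwd t q (q-k) via bwd_succ at d = q-(k+1)
      set d := q - (k+1) with hddef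
      have hqk : q - k = d + 1 := by omega
      have hqd : q - d = k + 1 := by omega
      set c := bwd t q d (k+1) with hcdef
      have hc : |c| < 1 := by
        have := hdiag (k+1) (by omega) hkq
        rwa [← hddef] at this
      have hc2 : (1:ℝ) - c^2 ≠ 0 := by nlinarith [abs_nonneg c, _root_.sq_abs c]
      have hζk : ζs (k+1) = c := by
        show bwd t q (q - (k+1)) (k+1) = c
        rw [← hddef]
      have e1 : bwd t q (q-k) i = (bwd t q d i + c * bwd t q d (k+1-i)) / (1 - c^2) := by
        rw [hqk, bwd_succ, hqd, ← hcdef]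
      have e2 : bwd t q (q-k) (k+1-i)
          = (bwd t q d (k+1-i) + c * bwd t q d i) / (1 - c^2) := by
        rw [hqk, bwd_succ, hqd, show k + 1 - (k+1-i) = i from by omega, ← hcdef]
      rw [e1, e2, hζk]
      field_simp
      ring

lemma exists_Bmap_eq {q : ℕ} (θ : Fin q → ℝ) (hθ : θ ∈ invRegion q) :
    ∃ ζ ∈ openCube q, Bmap ζ = θ := by
  set t := toSeq θ with htdef
  have hsum : ∀ z : ℂ, (∑ i : Fin q, (θ i : ℂ) * z ^ (i.1 + 1))
      = ∑ i ∈ Finset.range q, (t (i+1) : ℂ) * z ^ (i+1) := by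
    intro z
    rw [← Fin.sum_univ_eq_sum_range (fun n => (t (n+1) : ℂ) * z ^ (n+1)) q]
    apply Finset.sum_congr rfl
    intro i _
    have : t (i.1+1) = θ i := by
      rw [htdef, toSeq, dif_pos (by omega : i.1 + 1 - 1 < q)]
      simp
    rw [this]
  have ht : ∀ z : ℂ, ‖z‖ ≤ 1 → Pf t q z ≠ 0 := by
    intro z hz h0
    have : 1 - ∑ i : Fin q, (θ i : ℂ) * z ^ (i.1 + 1) = 0 := by
      rw [hsum]; exact h0
    exact absurd (hθ z this) (by linarith)
  set ζs : ℕ → ℝ := fun j => bwd t q (q - j) j with hζs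
  have hdiag : ∀ k, 1 ≤ k → k ≤ q → |ζs k| < 1 := by
    intro k h1 h2
    exact abs_diag_lt_one (bwd t q (q-k)) k h1
      (by have := bwd_nonzero t q ht (q-k) (by omega)
          rwa [show q - (q-k) = k from by omega] at this)
  refine ⟨fun i => ζs (i.1+1), ?_, ?_⟩
  · intro i
    exact Set.mem_Ioo.mpr (abs_lt.mp (hdiag (i.1+1) (by omega) (by omega)))
  · funext i
    show fwdRow (toSeq fun i => ζs (i.1+1)) q (i.1+1) = θ i
    rw [fwdRow_congr (toSeq fun i => ζs (i.1+1)) ζs q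
      (by intro j h1 h2
          rw [toSeq, dif_pos (by omega : j - 1 < q)]
          show ζs (j - 1 + 1) = ζs j
          rw [show j - 1 + 1 = j from by omega])]
    rw [bwd_fwd_inv t q ht q le_rfl (i.1+1) (by omega) (by omega)]
    rw [Nat.sub_self]
    show t (i.1+1) = θ i
    rw [htdef, toSeq, dif_pos (by omega : i.1 + 1 - 1 < q)]
    simp

/-! ### Continuity and compactness -/

lemma continuous_fwdRow {q : ℕ} : ∀ k i, Continuous fun ζ : Fin q → ℝ =>
    fwdRow (toSeq ζ) k i := by
  have htoSeq : ∀ n, Continuous fun ζ : Fin q → ℝ => toSeq ζ n := by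
    intro n
    by_cases h : n - 1 < q
    · simp only [toSeq, dif_pos h]
      exact continuous_apply _
    · simp only [toSeq, dif_neg h]
      exact continuous_const
  intro k
  induction k with
  | zero => intro i; exact continuous_const
  | succ k ih =>
    intro i
    by_cases hik : i = k + 1
    · simp only [fwdRow, if_pos hik]
      exact htoSeq (k+1)
    · simp only [fwdRow, if_neg hik]
      exact (ih i).sub ((htoSeq (k+1)).mul (ih (k+1-i)))

/-- For `q ≥ 1`, the image under `B` of the closed unit cube `[-1,1]^q` equals the
closure of the invertible region: `B(closure D_ζ) = closure D_θ`. -/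
theorem closure_image_eq {q : ℕ} (hq : 1 ≤ q) :
    Bmap '' closure (openCube q) = closure (invRegion q) := by
  have hcont : Continuous (Bmap (q := q)) :=
    continuous_pi fun i => continuous_fwdRow q (i.1+1)
  have hbdd : Bornology.IsBounded (openCube q) := by
    apply (Metric.isBounded_closedBall (x := (0 : Fin q → ℝ)) (r := 1)).subset
    intro ζ hζ
    rw [Metric.mem_closedBall, dist_zero_right]
    refine (pi_norm_le_iff_of_nonneg zero_le_one).mpr fun i => ?_
    have := hζ i
    rw [Real.norm_eq_abs]
    rcases this with ⟨h1, h2⟩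
    rw [abs_le]
    constructor <;> linarith
  have hcomp : IsCompact (closure (openCube q)) :=
    Metric.isCompact_of_isClosed_isBounded isClosed_closure hbdd.closure
  apply le_antisymm
  · calc Bmap '' closure (openCube q)
        ⊆ closure (Bmap '' openCube q) := image_closure_subset_closure_image hcont
      _ ⊆ closure (invRegion q) := by
          apply closure_mono
          rintro _ ⟨ζ, hζ, rfl⟩
          exact Bmap_mem_invRegion ζ hζ
  · apply closure_minimal
    · intro θ hθ
      obtain ⟨ζ, hζ, hB⟩ := exists_Bmap_eq θ hθ
      exact ⟨ζ, subset_closure hζ, hB⟩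
    · exact (hcomp.image hcont).isClosed
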